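/- Let A be a unital C*-algebra, K a complex Hilbert space, α : A → B(K) a unital positive linear map, and ξ ∈ K. If a ∈ A is self-adjoint and ⟨ξ, α(a²)ξ⟩ = 0, then α(a)ξ = 0. -/

import Mathlib

open scoped ComplexInnerProductSpace ComplexOrder

section Aux

variable {K : Type*} [NormedAddCommGroup K] [InnerProductSpace ℂ K] [CompleteSpace K]

lemma aux_inner_nonneg {T : K →L[ℂ] K} (hT : 0 ≤ T) (x : K) : 0 ≤ ⟪x, T x⟫ := by
  rw [ContinuousLinearMap.nonneg_iff_isPositive] at hT
  have h1 := hT.inner_nonneg_right x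
  have h2 : ⟪T x, x⟫ = ⟪x, T x⟫ :=
    (ContinuousLinearMap.isSelfAdjoint_iff_isSymmetric.mp hT.isSelfAdjoint) x x
  have h3 : (starRingEnd ℂ) ⟪x, T x⟫ = ⟪x, T x⟫ := by
    rw [inner_conj_symm]; exact h2
  rw [Complex.conj_eq_iff_im] at h3
  rw [Complex.le_def]
  constructor
  · exact (Complex.le_def.mp (by simpa using h1 : (0:ℂ) ≤ ⟪x, T x⟫)).1
  · simp [h3]

set_option synthInstance.maxHeartbeats 1000000 in
/-- A positive operator whose quadratic form vanishes at `ξ` kills `ξ`. -/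
lemma aux_apply_eq_zero {T : K →L[ℂ] K} (hT : 0 ≤ T) (ξ : K)
    (h : ⟪ξ, T ξ⟫ = 0) : T ξ = 0 := by
  set S := CFC.sqrt T with hSdef
  have hS : 0 ≤ S := CFC.sqrt_nonneg (a := T)
  have hSS : S * S = T := CFC.sqrt_mul_sqrt_self T hT
  have hSsa : IsSelfAdjoint S := IsSelfAdjoint.of_nonneg hS
  have hadj : ContinuousLinearMap.adjoint S = S := by
    rw [← ContinuousLinearMap.star_eq_adjoint, hSsa.star_eq]
  have : ⟪S ξ, S ξ⟫ = 0 := by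
    calc ⟪S ξ, S ξ⟫ = ⟪ContinuousLinearMap.adjoint S ξ, S ξ⟫ := by rw [hadj]
      _ = ⟪ξ, S (S ξ)⟫ := ContinuousLinearMap.adjoint_inner_left S (S ξ) ξ
      _ = ⟪ξ, (S * S) ξ⟫ := by rw [ContinuousLinearMap.mul_apply]
      _ = 0 := by rw [hSS, h]
  have hSz : S ξ = 0 := by rwa [inner_self_eq_zero] at this
  rw [← hSS, ContinuousLinearMap.mul_apply, hSz, map_zero]

end Aux

/-- If `α : A → B(K)` is a unital positive map, `a` is self-adjoint and
`⟨ξ, α(a²)ξ⟩ = 0`, then `α(a)ξ = 0`. -/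
theorem stmt4
    {A : Type*} [NormedRing A] [StarRing A] [CStarRing A] [NormedAlgebra ℂ A]
    [CompleteSpace A] [PartialOrder A] [StarOrderedRing A] [StarModule ℂ A]
    {K : Type*} [NormedAddCommGroup K] [InnerProductSpace ℂ K] [CompleteSpace K]
    (α : A →ₗ[ℂ] (K →L[ℂ] K))
    (h_unital : α 1 = 1)
    (h_pos : ∀ a : A, 0 ≤ a → 0 ≤ α a)
    (ξ : K) (a : A) (ha : IsSelfAdjoint a)
    (h : ⟪ξ, (α (a ^ 2)) ξ⟫ = 0) :
    (α a) ξ = 0 := by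
  letI : CStarAlgebra A := { }
  have hmono : ∀ x y : A, x ≤ y → α x ≤ α y := by
    intro x y hxy
    have := h_pos (y - x) (sub_nonneg.mpr hxy)
    rw [map_sub] at this
    exact sub_nonneg.mp this
  -- key: if 0 ≤ b and ⟪ξ, α (b^2) ξ⟫ = 0 then α b ξ = 0
  have key : ∀ b : A, 0 ≤ b → ⟪ξ, (α (b ^ 2)) ξ⟫ = 0 → (α b) ξ = 0 := by
    intro b hb hb2
    have hbsa : IsSelfAdjoint b := IsSelfAdjoint.of_nonneg hb
    have hαb : 0 ≤ α b := h_pos b hb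
    -- scalar inequality: ∀ s > 0, (2s) • α b ≤ α (b^2) + s^2 • 1
    have hineq : ∀ s : ℝ, 0 < s →
        ((2 * s : ℝ) : ℂ) • α b ≤ α (b ^ 2) + ((s ^ 2 : ℝ) : ℂ) • 1 := by
      intro s hs
      have hsq : (0 : A) ≤ (b - ((s : ℝ) : ℂ) • 1) * (b - ((s : ℝ) : ℂ) • 1) := by
        have := star_mul_self_nonneg (b - ((s : ℝ) : ℂ) • 1)
        have hstar : star (b - ((s : ℝ) : ℂ) • 1) = b - ((s : ℝ) : ℂ) • 1 := by
          simp [star_sub, hbsa.star_eq, star_smul, Complex.conj_ofReal]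
        rwa [hstar] at this
      have hexp : (b - ((s : ℝ) : ℂ) • 1) * (b - ((s : ℝ) : ℂ) • 1)
          = b ^ 2 + ((s ^ 2 : ℝ) : ℂ) • 1 - ((2 * s : ℝ) : ℂ) • b := by
        simp only [mul_sub, sub_mul, smul_mul_assoc, mul_smul_comm, one_mul, mul_one,
          smul_smul, sq]
        push_cast
        module
      rw [hexp, sub_nonneg] at hsq
      have := hmono _ _ hsq
      rwa [map_smul, map_add, map_smul, h_unital] at this
    -- pass to the quadratic form
    set r : ℝ := (⟪ξ, (α b) ξ⟫).re with hrdef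
    have hz : 0 ≤ ⟪ξ, (α b) ξ⟫ := aux_inner_nonneg hαb ξ
    have hr0 : 0 ≤ r := (Complex.le_def.mp hz).1
    have him : (⟪ξ, (α b) ξ⟫).im = 0 := ((Complex.le_def.mp hz).2).symm
    have hupper : ∀ s : ℝ, 0 < s → 2 * s * r ≤ s ^ 2 * ‖ξ‖ ^ 2 := by
      intro s hs
      have h1 := hineq s hs
      have h2 : 0 ≤ (α (b ^ 2) + ((s ^ 2 : ℝ) : ℂ) • 1) - ((2 * s : ℝ) : ℂ) • α b :=
        sub_nonneg.mpr h1
      have h3 := aux_inner_nonneg h2 ξ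
      have h4 := (Complex.le_def.mp h3).1
      simp only [ContinuousLinearMap.sub_apply, ContinuousLinearMap.add_apply,
        ContinuousLinearMap.smul_apply, ContinuousLinearMap.one_apply,
        inner_sub_right, inner_add_right, inner_smul_right, hb2, Complex.zero_re,
        Complex.sub_re, Complex.add_re, zero_add] at h4
      have hre1 : ((((s ^ 2 : ℝ)) : ℂ) * ⟪ξ, ξ⟫).re = s ^ 2 * ‖ξ‖ ^ 2 := by
        rw [inner_self_eq_norm_sq_to_K]
        simp [← Complex.ofReal_pow, ← Complex.ofReal_mul]
      have hre2 : ((((2 * s : ℝ)) : ℂ) * ⟪ξ, (α b) ξ⟫).re = 2 * s * r := by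
        rw [Complex.re_ofReal_mul]
      rw [hre1, hre2] at h4
      linarith
    have hrle : r ≤ 0 := by
      refine le_of_forall_pos_le_add fun ε hε => ?_
      rcases le_or_gt r 0 with h' | h'
      · linarith
      · have hN : (0:ℝ) < ‖ξ‖ ^ 2 + 1 := by positivity
        have hs : 0 < 2 * ε / (‖ξ‖ ^ 2 + 1) := by positivity
        have := hupper _ hs
        have hle : (2 * ε / (‖ξ‖ ^ 2 + 1)) * ‖ξ‖ ^ 2 ≤ 2 * ε := by
          rw [div_mul_eq_mul_div, div_le_iff₀ hN]
          nlinarith [sq_nonneg ‖ξ‖]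
        nlinarith [sq_nonneg (2 * ε / (‖ξ‖ ^ 2 + 1))]
    have hr : r = 0 := le_antisymm hrle hr0
    have hz0 : ⟪ξ, (α b) ξ⟫ = 0 := Complex.ext (by simpa [hrdef] using hr) him
    exact aux_apply_eq_zero hαb ξ hz0
  -- decompose a into positive and negative parts
  have hd : a⁺ - a⁻ = a := CFC.posPart_sub_negPart a ha
  have hp : (0 : A) ≤ a⁺ := CFC.posPart_nonneg a
  have hn : (0 : A) ≤ a⁻ := CFC.negPart_nonneg a
  have hsq : a ^ 2 = a⁺ ^ 2 + a⁻ ^ 2 := by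
    have h1 : a ^ 2 = (a⁺ - a⁻) * (a⁺ - a⁻) := by rw [hd, sq]
    rw [h1, mul_sub, sub_mul, sub_mul, CFC.posPart_mul_negPart, CFC.negPart_mul_posPart]
    ring_nf
    rw [sq, sq]
    abel
  have hsum : ⟪ξ, (α (a⁺ ^ 2)) ξ⟫ + ⟪ξ, (α (a⁻ ^ 2)) ξ⟫ = 0 := by
    rw [← inner_add_right, ← ContinuousLinearMap.add_apply, ← map_add, ← hsq]
    exact h
  have hpsq : (0 : A) ≤ a⁺ ^ 2 := by
    have := star_mul_self_nonneg (a⁺)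
    rwa [(IsSelfAdjoint.of_nonneg hp).star_eq, ← sq] at this
  have hnsq : (0 : A) ≤ a⁻ ^ 2 := by
    have := star_mul_self_nonneg (a⁻)
    rwa [(IsSelfAdjoint.of_nonneg hn).star_eq, ← sq] at this
  have hz1 : 0 ≤ ⟪ξ, (α (a⁺ ^ 2)) ξ⟫ := aux_inner_nonneg (h_pos _ hpsq) ξ
  have hz2 : 0 ≤ ⟪ξ, (α (a⁻ ^ 2)) ξ⟫ := aux_inner_nonneg (h_pos _ hnsq) ξ
  have he1 : ⟪ξ, (α (a⁺ ^ 2)) ξ⟫ = 0 := by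
    have : ⟪ξ, (α (a⁺ ^ 2)) ξ⟫ ≤ 0 := by
      calc ⟪ξ, (α (a⁺ ^ 2)) ξ⟫ ≤ ⟪ξ, (α (a⁺ ^ 2)) ξ⟫ + ⟪ξ, (α (a⁻ ^ 2)) ξ⟫ :=
            le_add_of_nonneg_right hz2
        _ = 0 := hsum
    exact le_antisymm this hz1
  have he2 : ⟪ξ, (α (a⁻ ^ 2)) ξ⟫ = 0 := by
    have : ⟪ξ, (α (a⁻ ^ 2)) ξ⟫ ≤ 0 := by
      calc ⟪ξ, (α (a⁻ ^ 2)) ξ⟫ ≤ ⟪ξ, (α (a⁺ ^ 2)) ξ⟫ + ⟪ξ, (α (a⁻ ^ 2)) ξ⟫ :=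
            le_add_of_nonneg_left hz1
        _ = 0 := hsum
    exact le_antisymm this hz2
  have k1 := key _ hp he1
  have k2 := key _ hn he2
  calc (α a) ξ = (α (a⁺ - a⁻)) ξ := by rw [hd]
    _ = (α a⁺) ξ - (α a⁻) ξ := by rw [map_sub, ContinuousLinearMap.sub_apply]
    _ = 0 := by rw [k1, k2, sub_zero]
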